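/- arXiv:1704.03645 — 2 statements merged into one kernel-verified Lean document; each statement's English description precedes it below -/
import Mathlib

section
/- Let H₀ be a nonzero real number and let u : ℝ × ℝ → ℝ be continuous, 2π-periodic in the second variable, with continuous time derivative ∂ₜu, satisfying for all t, x: ∂ₜu(t,x) = 𝒟(sin∘u(t,·))(x) − C̃(u(t,·))/H₀, together with ∫₀^{2π} sin(u(0,x)) dx = 0 and ∫₀^{2π} cos(u(0,x)) dx = H₀. Then for every t and x, the function y ↦ ∂ₜu(t,y) is differentiable at x with derivative sin(u(t,x)); that is, u is a classical solution of the sine-Gordon equation u_{tx} = sin u. -/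
open Real intervalIntegral

/-- The mean value `f̄ = (1/(2π)) ∫₀^{2π} f(y) dy` of a `2π`-periodic function. -/
noncomputable def fmean (f : ℝ → ℝ) : ℝ := (1 / (2 * π)) * ∫ y in (0:ℝ)..(2 * π), f y

/-- The antiderivative operator `𝒟`, the realization on continuous functions of the
maximal Tseng generalized inverse `∂ₓ†` of the spatial derivative on `𝕊 = ℝ/2πℤ`. -/
noncomputable def Dop (f : ℝ → ℝ) (x : ℝ) : ℝ :=
  (∫ y in (0:ℝ)..x, (f y - fmean f)) -
    (1 / (2 * π)) * ∫ z in (0:ℝ)..(2 * π), (∫ y in (0:ℝ)..z, (f y - fmean f))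

/-- `C̃(v) = ∫₀^{2π} cos(v(x)) ⬝ 𝒟(sin∘v)(x) dx`. -/
noncomputable def Ctilde (v : ℝ → ℝ) : ℝ :=
  ∫ x in (0:ℝ)..(2 * π), Real.cos (v x) * Dop (fun y => Real.sin (v y)) x

open MeasureTheory in
lemma hasDerivAt_Dop {f : ℝ → ℝ} (hf : Continuous f) (x : ℝ) :
    HasDerivAt (Dop f) (f x - fmean f) x := by
  have hc : Continuous fun y => f y - fmean f := hf.sub continuous_const
  have h1 : HasDerivAt (fun x => ∫ y in (0:ℝ)..x, (f y - fmean f)) (f x - fmean f) x :=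
    intervalIntegral.integral_hasDerivAt_right (hc.intervalIntegrable _ _)
      (hc.stronglyMeasurableAtFilter _ _) hc.continuousAt
  exact h1.sub_const _

lemma continuous_Dop {f : ℝ → ℝ} (hf : Continuous f) : Continuous (Dop f) := by
  have : Differentiable ℝ (Dop f) := fun x => (hasDerivAt_Dop hf x).differentiableAt
  exact this.continuous

lemma Dop_apply_two_pi_eq {f : ℝ → ℝ} (hf : Continuous f) : Dop f (2 * π) = Dop f 0 := by
  have hc : Continuous fun y => f y - fmean f := hf.sub continuous_const
  have h : (∫ y in (0:ℝ)..(2*π), (f y - fmean f)) = 0 := by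
    rw [intervalIntegral.integral_sub (hf.intervalIntegrable _ _)
      (intervalIntegrable_const), intervalIntegral.integral_const]
    have hπ : (2 * π) ≠ 0 := by positivity
    simp [fmean, smul_eq_mul]
    field_simp
    ring
  simp [Dop, h]

lemma integral_Dop_eq_zero {f : ℝ → ℝ} (hf : Continuous f) :
    (∫ x in (0:ℝ)..(2*π), Dop f x) = 0 := by
  have hc : Continuous fun y => f y - fmean f := hf.sub continuous_const
  have hG : Continuous fun x => ∫ y in (0:ℝ)..x, (f y - fmean f) := by
    have : Differentiable ℝ fun x => ∫ y in (0:ℝ)..x, (f y - fmean f) := fun x =>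
      (intervalIntegral.integral_hasDerivAt_right (hc.intervalIntegrable _ _)
        (hc.stronglyMeasurableAtFilter _ _) hc.continuousAt).differentiableAt
    exact this.continuous
  have hsplit : (∫ x in (0:ℝ)..(2*π), Dop f x)
      = (∫ x in (0:ℝ)..(2*π), ∫ y in (0:ℝ)..x, (f y - fmean f))
        - (∫ x in (0:ℝ)..(2*π), (1 / (2 * π)) *
            ∫ z in (0:ℝ)..(2 * π), (∫ y in (0:ℝ)..z, (f y - fmean f))) := by
    unfold Dop
    rw [intervalIntegral.integral_sub (hG.intervalIntegrable _ _) intervalIntegrable_const]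
  rw [hsplit, intervalIntegral.integral_const]
  have hπ : (2 * π) ≠ 0 := by positivity
  field_simp [smul_eq_mul]
  rw [sub_zero, smul_eq_mul, mul_div_cancel₀ _ hπ, sub_self]

lemma integral_mul_Dop_eq_zero {f : ℝ → ℝ} (hf : Continuous f) :
    (∫ x in (0:ℝ)..(2*π), f x * Dop f x) = 0 := by
  have hD := continuous_Dop hf
  have h1 : (∫ x in (0:ℝ)..(2*π), (f x - fmean f) * Dop f x) = 0 := by
    have heq : (∫ x in (0:ℝ)..(2*π), (f x - fmean f) * Dop f x)
        = Dop f (2*π) ^ 2 / 2 - Dop f 0 ^ 2 / 2 := by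
      apply intervalIntegral.integral_eq_sub_of_hasDerivAt (f := fun x => Dop f x ^ 2 / 2)
      · intro x _
        have := ((hasDerivAt_Dop hf x).pow 2).div_const 2
        exact this.congr_deriv (by simp only [Nat.reduceSub, pow_one, Nat.cast_ofNat]; ring)
      · exact ((hf.sub continuous_const).mul hD).intervalIntegrable _ _
    rw [heq, Dop_apply_two_pi_eq hf]
    ring
  have h2 : (∫ x in (0:ℝ)..(2*π), fmean f * Dop f x) = 0 := by
    rw [intervalIntegral.integral_const_mul, integral_Dop_eq_zero hf, mul_zero]
  have h3 : (∫ x in (0:ℝ)..(2*π), f x * Dop f x)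
      = (∫ x in (0:ℝ)..(2*π), (f x - fmean f) * Dop f x)
        + (∫ x in (0:ℝ)..(2*π), fmean f * Dop f x) := by
    rw [← intervalIntegral.integral_add (f := fun x => (f x - fmean f) * Dop f x)
      (g := fun x => fmean f * Dop f x) (((hf.sub continuous_const).mul hD).intervalIntegrable _ _)
      ((continuous_const.mul hD).intervalIntegrable _ _)]
    congr 1; ext x; ring
  rw [h3, h1, h2, add_zero]

lemma hasDerivAt_param {v v' : ℝ → ℝ → ℝ}
    (hv : Continuous (Function.uncurry v)) (hv' : Continuous (Function.uncurry v'))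
    (hd : ∀ s x : ℝ, HasDerivAt (fun s => v s x) (v' s x) s) (t : ℝ) :
    HasDerivAt (fun s => ∫ x in (0:ℝ)..(2*π), v s x)
      (∫ x in (0:ℝ)..(2*π), v' t x) t := by
  have hK : IsCompact ((Metric.closedBall t 1) ×ˢ (Set.uIcc (0:ℝ) (2*π))) :=
    (isCompact_closedBall t 1).prod isCompact_uIcc
  obtain ⟨C, hC⟩ := hK.exists_bound_of_continuousOn hv'.continuousOn
  have hvs : ∀ s : ℝ, Continuous (v s) := fun s =>
    hv.comp (continuous_const.prodMk continuous_id)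
  have hvs' : ∀ s : ℝ, Continuous (v' s) := fun s =>
    hv'.comp (continuous_const.prodMk continuous_id)
  have := (intervalIntegral.hasDerivAt_integral_of_dominated_loc_of_deriv_le
    (F := v) (F' := v') (x₀ := t) (a := (0:ℝ)) (b := 2*π) (bound := fun _ => C)
    (Metric.ball_mem_nhds t one_pos)
    (Filter.Eventually.of_forall fun s => ((hvs s).aestronglyMeasurable).restrict)
    (((hvs t)).intervalIntegrable _ _)
    (((hvs' t)).aestronglyMeasurable).restrict
    (MeasureTheory.ae_of_all _ fun x hx s hs => by
      have : ‖v' s x‖ ≤ C := hC (s, x) ⟨Metric.ball_subset_closedBall hs,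
        Set.uIoc_subset_uIcc hx⟩
      simpa using this)
    (_root_.intervalIntegrable_const (μ := MeasureTheory.volume) (c := C))
    (MeasureTheory.ae_of_all _ fun x _ s _ => hd s x))
  exact this.2

/-- A solution of the integral form `∂ₜu = 𝒟(sin∘u(t,·)) − C̃(u(t,·))/H₀` of the
sine-Gordon equation with `ℱ(u(0,·)) = 0` and `ℋ(u(0,·)) = H₀ ≠ 0` is a classical
solution of the sine-Gordon equation `u_{tx} = sin u`: for every `t` and `x`, the
function `y ↦ ∂ₜu(t,y)` is differentiable at `x` with derivative `sin(u(t,x))`. -/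
theorem sineGordon_integral_solves_differential_form (H₀ : ℝ) (hH₀ : H₀ ≠ 0)
    (u ut : ℝ → ℝ → ℝ)
    (hu : Continuous (Function.uncurry u))
    (hper : ∀ t x : ℝ, u t (x + 2 * π) = u t x)
    (hut : Continuous (Function.uncurry ut))
    (hderiv : ∀ t x : ℝ, HasDerivAt (fun s => u s x) (ut t x) t)
    (heq : ∀ t x : ℝ, ut t x = Dop (fun y => Real.sin (u t y)) x - Ctilde (u t) / H₀)
    (hF0 : (∫ x in (0:ℝ)..(2 * π), Real.sin (u 0 x)) = 0)
    (hH0 : (∫ x in (0:ℝ)..(2 * π), Real.cos (u 0 x)) = H₀) :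
    ∀ t x : ℝ, HasDerivAt (fun y => ut t y) (Real.sin (u t x)) x := by
  -- continuity facts
  have hus : ∀ s : ℝ, Continuous (u s) := fun s =>
    hu.comp (continuous_const.prodMk continuous_id)
  have huts : ∀ s : ℝ, Continuous (ut s) := fun s =>
    hut.comp (continuous_const.prodMk continuous_id)
  have hsin : ∀ s : ℝ, Continuous fun y => Real.sin (u s y) := fun s =>
    Real.continuous_sin.comp (hus s)
  have hcos : ∀ s : ℝ, Continuous fun y => Real.cos (u s y) := fun s =>
    Real.continuous_cos.comp (hus s)
  set F : ℝ → ℝ := fun s => ∫ x in (0:ℝ)..(2*π), Real.sin (u s x) with hFdef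
  set H : ℝ → ℝ := fun s => ∫ x in (0:ℝ)..(2*π), Real.cos (u s x) with hHdef
  set c : ℝ → ℝ := fun s => Ctilde (u s) / H₀ with hcdef
  -- derivative of F
  have hF' : ∀ s : ℝ, HasDerivAt F (∫ x in (0:ℝ)..(2*π), Real.cos (u s x) * ut s x) s := by
    intro s
    apply hasDerivAt_param (v := fun s x => Real.sin (u s x))
      (v' := fun s x => Real.cos (u s x) * ut s x)
    · exact Real.continuous_sin.comp hu
    · exact (Real.continuous_cos.comp hu).mul hut
    · exact fun s x => (hderiv s x).sin
  have hH' : ∀ s : ℝ, HasDerivAt H (∫ x in (0:ℝ)..(2*π), -(Real.sin (u s x) * ut s x)) s := by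
    intro s
    apply hasDerivAt_param (v := fun s x => Real.cos (u s x))
      (v' := fun s x => -(Real.sin (u s x) * ut s x))
    · exact Real.continuous_cos.comp hu
    · exact ((Real.continuous_sin.comp hu).mul hut).neg
    · intro s x
      have := (hderiv s x).cos
      simpa [neg_mul] using this
  -- evaluate the derivative integrands
  have hDopC : ∀ s : ℝ, Continuous (Dop fun y => Real.sin (u s y)) := fun s =>
    continuous_Dop (hsin s)
  have key1 : ∀ s : ℝ,
      (∫ x in (0:ℝ)..(2*π), Real.cos (u s x) * ut s x) = c s * (H₀ - H s) := by
    intro s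
    have h1 : ∀ x : ℝ, Real.cos (u s x) * ut s x
        = Real.cos (u s x) * Dop (fun y => Real.sin (u s y)) x
          - c s * Real.cos (u s x) := by
      intro x; rw [heq s x]; ring
    rw [intervalIntegral.integral_congr (g := fun x =>
        Real.cos (u s x) * Dop (fun y => Real.sin (u s y)) x - c s * Real.cos (u s x))
        (fun x _ => h1 x)]
    rw [intervalIntegral.integral_sub (f := fun x => Real.cos (u s x) * Dop (fun y => Real.sin (u s y)) x)
        (g := fun x => c s * Real.cos (u s x)) (((hcos s).mul (hDopC s)).intervalIntegrable _ _)
        ((continuous_const.mul (hcos s)).intervalIntegrable _ _),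
      intervalIntegral.integral_const_mul]
    have hCt : (∫ x in (0:ℝ)..(2*π),
        Real.cos (u s x) * Dop (fun y => Real.sin (u s y)) x) = Ctilde (u s) := rfl
    rw [hCt]
    have : Ctilde (u s) = c s * H₀ := by rw [hcdef]; exact (div_mul_cancel₀ _ hH₀).symm
    rw [this, hHdef]
    ring
  have key2 : ∀ s : ℝ,
      (∫ x in (0:ℝ)..(2*π), -(Real.sin (u s x) * ut s x)) = c s * F s := by
    intro s
    have h1 : ∀ x : ℝ, -(Real.sin (u s x) * ut s x)
        = c s * Real.sin (u s x)
          - Real.sin (u s x) * Dop (fun y => Real.sin (u s y)) x := by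
      intro x; rw [heq s x]; ring
    rw [intervalIntegral.integral_congr (g := fun x =>
        c s * Real.sin (u s x)
          - Real.sin (u s x) * Dop (fun y => Real.sin (u s y)) x)
        (fun x _ => h1 x)]
    rw [intervalIntegral.integral_sub (f := fun x => c s * Real.sin (u s x))
        (g := fun x => Real.sin (u s x) * Dop (fun y => Real.sin (u s y)) x) ((continuous_const.mul (hsin s)).intervalIntegrable _ _)
        (((hsin s).mul (hDopC s)).intervalIntegrable _ _),
      intervalIntegral.integral_const_mul, integral_mul_Dop_eq_zero (hsin s)]
    rw [hFdef]; ring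
  -- the energy is constant
  set E : ℝ → ℝ := fun s => F s ^ 2 + (H s - H₀) ^ 2 with hEdef
  have hE' : ∀ s : ℝ, HasDerivAt E 0 s := by
    intro s
    have h1 : HasDerivAt F (c s * (H₀ - H s)) s := by rw [← key1 s]; exact hF' s
    have h2 : HasDerivAt H (c s * F s) s := by rw [← key2 s]; exact hH' s
    have := (h1.pow 2).add (((h2.sub_const H₀).pow 2))
    exact this.congr_deriv (by simp only [Nat.reduceSub, pow_one, Nat.cast_ofNat]; ring)
  have hEconst : ∀ s : ℝ, E s = E 0 := fun s =>
    is_const_of_deriv_eq_zero (fun x => (hE' x).differentiableAt)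
      (fun x => (hE' x).deriv) s 0
  have hE0 : E 0 = 0 := by
    simp only [hEdef, hFdef, hHdef]
    rw [hF0, hH0]
    ring
  have hFzero : ∀ s : ℝ, F s = 0 := by
    intro s
    have h := (hEconst s).trans hE0
    simp only [hEdef] at h
    nlinarith [sq_nonneg (F s), sq_nonneg (H s - H₀)]
  -- conclude
  intro t x
  have hm : fmean (fun y => Real.sin (u t y)) = 0 := by
    have := hFzero t
    simp only [hFdef] at this
    simp [fmean, this]
  have hfin : (fun y => ut t y) = fun y =>
      Dop (fun y => Real.sin (u t y)) y - Ctilde (u t) / H₀ := by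
    funext y; exact heq t y
  rw [hfin]
  have := (hasDerivAt_Dop (hsin t) x).sub_const (Ctilde (u t) / H₀)
  simpa [hm] using this
end

section
/- Let H₀ be a nonzero real number and let v, w : ℝ → ℝ be continuous and 2π-periodic. Then (∫₀^{2π} [ (𝒟(sin∘v)(x) − C̃(v)/H₀) − (𝒟(sin∘w)(x) − C̃(w)/H₀) ]² dx)^{1/2} ≤ (1 + 4π/|H₀|) · (∫₀^{2π} (v(x) − w(x))² dx)^{1/2}; that is, the vector field of the integral form of the sine-Gordon equation is globally Lipschitz with respect to the L² norm. -/
open Real intervalIntegral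

private lemma pi2_pos : (0:ℝ) < 2 * π := by positivity

open MeasureTheory Function Set

section basic
variable {f g : ℝ → ℝ}

lemma continuous_primitive' (hf : Continuous f) :
    Continuous fun x => ∫ y in (0:ℝ)..x, f y :=
  intervalIntegral.continuous_primitive (fun a b => hf.intervalIntegrable a b) 0

lemma hasDerivAt_primitive (hf : Continuous f) (x : ℝ) :
    HasDerivAt (fun x => ∫ y in (0:ℝ)..x, f y) (f x) x :=
  intervalIntegral.integral_hasDerivAt_right (hf.intervalIntegrable 0 x)
    (hf.stronglyMeasurable.stronglyMeasurableAtFilter) hf.continuousAt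

lemma integral_sub_fmean (hf : Continuous f) :
    ∫ y in (0:ℝ)..(2*π), (f y - fmean f) = 0 := by
  rw [intervalIntegral.integral_sub (hf.intervalIntegrable _ _)
    (intervalIntegrable_const), intervalIntegral.integral_const, fmean]
  simp only [smul_eq_mul, sub_zero]
  field_simp
  ring

lemma Dop_continuous (hf : Continuous f) : Continuous (Dop f) := by
  have : Continuous fun x => ∫ y in (0:ℝ)..x, (f y - fmean f) :=
    continuous_primitive' (hf.sub continuous_const)
  exact this.sub continuous_const

lemma primitive_periodic (hf : Continuous f) (hfp : Periodic f (2*π))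
    (hm : ∫ y in (0:ℝ)..(2*π), f y = 0) :
    Periodic (fun x => ∫ y in (0:ℝ)..x, f y) (2*π) := by
  intro x
  have h1 : ∫ y in (0:ℝ)..(x + 2*π), f y =
      (∫ y in (0:ℝ)..x, f y) + ∫ y in x..(x + 2*π), f y :=
    (intervalIntegral.integral_add_adjacent_intervals (hf.intervalIntegrable _ _)
      (hf.intervalIntegrable _ _)).symm
  have h2 : ∫ y in x..(x + 2*π), f y = ∫ y in (0:ℝ)..(0 + 2*π), f y :=
    hfp.intervalIntegral_add_eq x 0
  simp only [zero_add] at h2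
  simp [h1, h2, hm]

lemma Dop_periodic (hf : Continuous f) (hfp : Periodic f (2*π)) :
    Periodic (Dop f) (2*π) := by
  intro x
  have := primitive_periodic (hf.sub continuous_const)
    (fun t => by simp [hfp t]) (integral_sub_fmean hf) x
  simp only [Dop]
  simp only [Pi.sub_apply] at this
  rw [this]

lemma Dop_integral_zero (hf : Continuous f) :
    ∫ x in (0:ℝ)..(2*π), Dop f x = 0 := by
  have hc : Continuous fun x => ∫ y in (0:ℝ)..x, (f y - fmean f) :=
    continuous_primitive' (hf.sub continuous_const)
  rw [show Dop f = fun x => (∫ y in (0:ℝ)..x, (f y - fmean f)) -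
      (1 / (2 * π)) * ∫ z in (0:ℝ)..(2 * π), (∫ y in (0:ℝ)..z, (f y - fmean f)) from rfl]
  rw [intervalIntegral.integral_sub (hc.intervalIntegrable _ _) intervalIntegrable_const,
    intervalIntegral.integral_const]
  have h2π : (2*π) ≠ 0 := pi2_pos.ne'
  field_simp
  rw [smul_eq_mul, sub_zero, mul_div_assoc', sub_eq_zero, eq_div_iff h2π, mul_comm _ (2*π)]

lemma fmean_sub (hf : Continuous f) (hg : Continuous g) :
    fmean (fun x => f x - g x) = fmean f - fmean g := by
  unfold fmean
  rw [intervalIntegral.integral_sub (hf.intervalIntegrable _ _) (hg.intervalIntegrable _ _)]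
  ring

lemma Dop_sub (hf : Continuous f) (hg : Continuous g) (x : ℝ) :
    Dop (fun y => f y - g y) x = Dop f x - Dop g x := by
  have key : ∀ z : ℝ, (∫ y in (0:ℝ)..z, ((fun y => f y - g y) y - fmean (fun y => f y - g y)))
      = (∫ y in (0:ℝ)..z, (f y - fmean f)) - ∫ y in (0:ℝ)..z, (g y - fmean g) := by
    intro z
    rw [← intervalIntegral.integral_sub (f := fun y => f y - fmean f) (g := fun y => g y - fmean g)
      ((hf.sub continuous_const).intervalIntegrable _ _)
      ((hg.sub continuous_const).intervalIntegrable _ _)]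
    refine intervalIntegral.integral_congr fun y _ => ?_
    rw [fmean_sub hf hg]; ring
  unfold Dop
  rw [key x]
  have : (∫ z in (0:ℝ)..(2*π), ∫ y in (0:ℝ)..z,
        ((fun y => f y - g y) y - fmean fun y => f y - g y))
      = (∫ z in (0:ℝ)..(2*π), ∫ y in (0:ℝ)..z, (f y - fmean f))
        - ∫ z in (0:ℝ)..(2*π), ∫ y in (0:ℝ)..z, (g y - fmean g) := by
    rw [← intervalIntegral.integral_sub (f := fun z => ∫ y in (0:ℝ)..z, (f y - fmean f))
      (g := fun z => ∫ y in (0:ℝ)..z, (g y - fmean g))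
      ((continuous_primitive' (hf.sub continuous_const)).intervalIntegrable _ _)
      ((continuous_primitive' (hg.sub continuous_const)).intervalIntegrable _ _)]
    exact intervalIntegral.integral_congr fun z _ => key z
  rw [this]
  ring

end basic

section wirtinger

open AddCircle ContinuousMap

lemma wirtinger_ineq (G h : ℝ → ℝ) (hGc : Continuous G) (hhc : Continuous h)
    (hGp : Periodic G (2*π)) (hhp : Periodic h (2*π))
    (hGd : ∀ x, HasDerivAt G (h x) x)
    (hGm : ∫ x in (0:ℝ)..(2*π), G x = 0) :
    ∫ x in (0:ℝ)..(2*π), (G x)^2 ≤ ∫ x in (0:ℝ)..(2*π), (h x)^2 := by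
  haveI hT : Fact (0 < 2*π) := ⟨pi2_pos⟩
  -- complexifications
  set Gc : ℝ → ℂ := fun x => ((G x : ℂ)) with hGcdef
  set hC : ℝ → ℂ := fun x => ((h x : ℂ)) with hhCdef
  have hGcCont : Continuous Gc := Complex.continuous_ofReal.comp hGc
  have hhCCont : Continuous hC := Complex.continuous_ofReal.comp hhc
  have hGcP : Periodic Gc (2*π) := fun x => congrArg Complex.ofReal (hGp x)
  have hhCP : Periodic hC (2*π) := fun x => congrArg Complex.ofReal (hhp x)
  have hGcd : ∀ x, HasDerivAt Gc (hC x) x := fun x => (hGd x).ofReal_comp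
  -- lifts to the circle
  set Gq : AddCircle (2*π) → ℂ := hGcP.lift with hGqdef
  set Hq : AddCircle (2*π) → ℂ := hhCP.lift with hHqdef
  have hGqcont : Continuous Gq := hGcCont.quotient_liftOn' _
  have hHqcont : Continuous Hq := hhCCont.quotient_liftOn' _
  have hGqcoe : ∀ x : ℝ, Gq x = Gc x := fun x => Periodic.lift_coe hGcP x
  have hHqcoe : ∀ x : ℝ, Hq x = hC x := fun x => Periodic.lift_coe hhCP x
  -- Fourier coefficients as interval integrals
  have coeff_eq : ∀ (L : AddCircle (2*π) → ℂ) (F : ℝ → ℂ), (∀ x : ℝ, L x = F x) → ∀ n : ℤ,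
      fourierCoeff L n
        = (1/(2*π) : ℝ) • ∫ x in (0:ℝ)..(2*π), fourier (-n) (x : AddCircle (2*π)) * F x := by
    intro L F hLF n
    rw [fourierCoeff_eq_intervalIntegral L n 0]
    congr 1
    rw [zero_add]
    exact intervalIntegral.integral_congr fun x _ => by rw [smul_eq_mul, hLF x]
  -- coefficient 0 of Gq vanishes
  have hG0 : fourierCoeff Gq 0 = 0 := by
    rw [coeff_eq Gq Gc hGqcoe 0]
    have : (∫ x in (0:ℝ)..(2*π), fourier (-(0:ℤ)) (x : AddCircle (2*π)) * Gc x)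
        = ∫ x in (0:ℝ)..(2*π), Gc x := by
      refine intervalIntegral.integral_congr fun x _ => ?_
      simp [fourier_zero]
    rw [this]
    have : (∫ x in (0:ℝ)..(2*π), Gc x) = ((∫ x in (0:ℝ)..(2*π), G x : ℝ) : ℂ) :=
      intervalIntegral.integral_ofReal
    rw [this, hGm]
    simp
  -- integration by parts: coefficient relation for n ≠ 0
  have hrel : ∀ n : ℤ, n ≠ 0 → ‖fourierCoeff Gq n‖ ≤ ‖fourierCoeff Hq n‖ := by
    intro n hn
    set e : ℝ → ℂ := fun x => fourier (-n) (x : AddCircle (2*π)) with hedef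
    have he : Continuous e :=
      (map_continuous (fourier (-n))).comp (AddCircle.continuous_mk' _)
    set K : ℂ := ((2*π : ℝ) : ℂ) / (-2 * (π:ℂ) * Complex.I * (n:ℂ)) with hKdef
    have hv : ∀ x : ℝ, HasDerivAt (fun y : ℝ => K * e y) (e x) x := fun x =>
      has_antideriv_at_fourier_neg hT hn x
    have ibp := intervalIntegral.integral_mul_deriv_eq_deriv_mul
      (u := Gc) (u' := hC) (v := fun y => K * e y) (v' := e)
      (fun x _ => hGcd x) (fun x _ => hv x)
      (hhCCont.intervalIntegrable 0 (2*π)) (he.intervalIntegrable 0 (2*π))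
    -- boundary terms vanish
    have hb1 : Gc (2*π) = Gc 0 := by
      have := hGcP 0; simpa using this
    have hb2 : ((2*π : ℝ) : AddCircle (2*π)) = ((0 : ℝ) : AddCircle (2*π)) := by
      simpa using AddCircle.coe_add_period (2*π) 0
    have hb3 : e (2*π) = e 0 := by rw [hedef]; simp only; rw [hb2]
    have hKint : (∫ x in (0:ℝ)..(2*π), hC x * (K * e x))
        = K * ∫ x in (0:ℝ)..(2*π), hC x * e x := by
      rw [← intervalIntegral.integral_const_mul]
      exact intervalIntegral.integral_congr fun x _ => by ring
    have key : (∫ x in (0:ℝ)..(2*π), Gc x * e x)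
        = -K * ∫ x in (0:ℝ)..(2*π), hC x * e x := by
      simp only [hb1, hb3] at ibp
      rw [ibp, hKint]; ring
    have crel : fourierCoeff Gq n = -K * fourierCoeff Hq n := by
      rw [coeff_eq Gq Gc hGqcoe n, coeff_eq Hq hC hHqcoe n]
      have : (∫ x in (0:ℝ)..(2*π), fourier (-n) (x : AddCircle (2*π)) * Gc x)
          = -K * ∫ x in (0:ℝ)..(2*π), fourier (-n) (x : AddCircle (2*π)) * hC x := by
        have e1 : (∫ x in (0:ℝ)..(2*π), fourier (-n) (x : AddCircle (2*π)) * Gc x)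
            = ∫ x in (0:ℝ)..(2*π), Gc x * e x :=
          intervalIntegral.integral_congr fun x _ => by rw [hedef]; ring
        have e2 : (∫ x in (0:ℝ)..(2*π), fourier (-n) (x : AddCircle (2*π)) * hC x)
            = ∫ x in (0:ℝ)..(2*π), hC x * e x :=
          intervalIntegral.integral_congr fun x _ => by rw [hedef]; ring
        rw [e1, e2, key]
      rw [this, mul_smul_comm]
    rw [crel]
    have hKnorm : ‖-K‖ ≤ 1 := by
      rw [norm_neg, hKdef]
      rw [norm_div]
      have h1 : ‖((2*π:ℝ) : ℂ)‖ = 2*π := by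
        rw [Complex.norm_real]; exact abs_of_pos pi2_pos
      have h2 : ‖(-2 * (π:ℂ) * Complex.I * (n:ℂ))‖ = 2*π*|(n:ℝ)| := by
        simp only [norm_mul, Complex.norm_I, Complex.norm_intCast]
        rw [show ‖(-2 : ℂ)‖ = 2 by simp, show ‖((π:ℝ):ℂ)‖ = π by
          rw [Complex.norm_real]; exact abs_of_pos pi_pos]
        push_cast
        ring
      rw [h1, h2]
      have hn1 : (1:ℝ) ≤ |(n:ℝ)| := by
        rw [← Int.cast_abs]
        exact_mod_cast Int.one_le_abs hn
      rw [div_le_one (by positivity)]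
      nlinarith [pi2_pos]
    calc ‖-K * fourierCoeff Hq n‖ = ‖-K‖ * ‖fourierCoeff Hq n‖ := norm_mul _ _
      _ ≤ 1 * ‖fourierCoeff Hq n‖ := by
          exact mul_le_mul_of_nonneg_right hKnorm (norm_nonneg _)
      _ = ‖fourierCoeff Hq n‖ := one_mul _
  -- termwise comparison of squared coefficients
  have hle : ∀ n : ℤ, ‖fourierCoeff Gq n‖^2 ≤ ‖fourierCoeff Hq n‖^2 := by
    intro n
    by_cases hn : n = 0
    · subst hn; rw [hG0]; simpa using sq_nonneg ‖fourierCoeff Hq 0‖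
    · exact pow_le_pow_left₀ (norm_nonneg _) (hrel n hn) 2
  -- Parseval for both
  set GqC : C(AddCircle (2*π), ℂ) := ⟨Gq, hGqcont⟩ with hGqCdef
  set HqC : C(AddCircle (2*π), ℂ) := ⟨Hq, hHqcont⟩ with hHqCdef
  have PG := tsum_sq_fourierCoeff (toLp (E := ℂ) 2 haarAddCircle ℂ GqC)
  have PH := tsum_sq_fourierCoeff (toLp (E := ℂ) 2 haarAddCircle ℂ HqC)
  have hcg : ∀ n, fourierCoeff (⇑(toLp (E := ℂ) 2 haarAddCircle ℂ GqC)) n = fourierCoeff Gq n :=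
    fun n => fourierCoeff_toLp GqC n
  have hch : ∀ n, fourierCoeff (⇑(toLp (E := ℂ) 2 haarAddCircle ℂ HqC)) n = fourierCoeff Hq n :=
    fun n => fourierCoeff_toLp HqC n
  have intG : (∫ t : AddCircle (2*π), ‖(toLp (E := ℂ) 2 haarAddCircle ℂ GqC) t‖^2 ∂haarAddCircle)
      = ∫ t : AddCircle (2*π), ‖Gq t‖^2 ∂haarAddCircle := by
    refine integral_congr_ae ?_
    filter_upwards [ContinuousMap.coeFn_toLp (p := 2) (μ := haarAddCircle) (𝕜 := ℂ) GqC]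
      with x hx
    rw [hx]; rfl
  have intH : (∫ t : AddCircle (2*π), ‖(toLp (E := ℂ) 2 haarAddCircle ℂ HqC) t‖^2 ∂haarAddCircle)
      = ∫ t : AddCircle (2*π), ‖Hq t‖^2 ∂haarAddCircle := by
    refine integral_congr_ae ?_
    filter_upwards [ContinuousMap.coeFn_toLp (p := 2) (μ := haarAddCircle) (𝕜 := ℂ) HqC]
      with x hx
    rw [hx]; rfl
  simp_rw [hcg, intG] at PG
  simp_rw [hch, intH] at PH
  -- summability
  have hsum : Summable fun n : ℤ => ‖fourierCoeff Hq n‖^2 := by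
    have hmem := lp.memℓp (fourierBasis.repr (toLp (E := ℂ) 2 haarAddCircle ℂ HqC))
    rw [memℓp_gen_iff (by norm_num : (0:ℝ) < (2 : ENNReal).toReal)] at hmem
    have : ∀ n : ℤ, ‖(fourierBasis.repr (toLp (E := ℂ) 2 haarAddCircle ℂ HqC)) n‖
        ^ (2 : ENNReal).toReal = ‖fourierCoeff Hq n‖^2 := by
      intro n
      rw [fourierBasis_repr, hch n]
      rw [show (2 : ENNReal).toReal = ((2:ℕ):ℝ) by norm_num, Real.rpow_natCast]
    simpa only [this] using hmem
  have hsumG : Summable fun n : ℤ => ‖fourierCoeff Gq n‖^2 :=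
    hsum.of_nonneg_of_le (fun n => by positivity) hle
  have tsum_le : ∑' n : ℤ, ‖fourierCoeff Gq n‖^2 ≤ ∑' n : ℤ, ‖fourierCoeff Hq n‖^2 :=
    Summable.tsum_le_tsum hle hsumG hsum
  -- convert circle integrals to interval integrals
  have conv : ∀ (F : ℝ → ℝ) (L : AddCircle (2*π) → ℂ), Continuous L →
      (∀ x : ℝ, L x = ((F x : ℂ))) →
      (∫ x in (0:ℝ)..(2*π), (F x)^2)
        = (2*π) * ∫ t : AddCircle (2*π), ‖L t‖^2 ∂haarAddCircle := by
    intro F L hLc hLF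
    have h1 : (∫ t : AddCircle (2*π), ‖L t‖^2)
        = (2*π) * ∫ t : AddCircle (2*π), ‖L t‖^2 ∂haarAddCircle := by
      rw [volume_eq_smul_haarAddCircle, MeasureTheory.integral_smul_measure,
        ENNReal.toReal_ofReal pi2_pos.le, smul_eq_mul]
    have h2 : (∫ x in (0:ℝ)..(0 + 2*π), ‖L (x : AddCircle (2*π))‖^2)
        = ∫ t : AddCircle (2*π), ‖L t‖^2 :=
      AddCircle.intervalIntegral_preimage (2*π) 0 (fun t => ‖L t‖^2)
    rw [← h1, ← h2, zero_add]
    refine intervalIntegral.integral_congr fun x _ => ?_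
    rw [hLF x, Complex.norm_real, Real.norm_eq_abs, sq_abs]
  rw [conv G Gq hGqcont hGqcoe, conv h Hq hHqcont hHqcoe, ← PG, ← PH]
  exact mul_le_mul_of_nonneg_left tsum_le pi2_pos.le

end wirtinger

section ineq
variable {f g : ℝ → ℝ}

lemma sq_int_nonneg (f : ℝ → ℝ) : 0 ≤ ∫ x in (0:ℝ)..(2*π), (f x)^2 :=
  intervalIntegral.integral_nonneg pi2_pos.le (fun x _ => sq_nonneg _)

lemma sq_expand (hf : Continuous f) (hg : Continuous g) (t : ℝ) :
    (∫ x in (0:ℝ)..(2*π), (f x + t * g x)^2)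
      = (∫ x in (0:ℝ)..(2*π), (f x)^2) + 2*t*(∫ x in (0:ℝ)..(2*π), f x * g x)
        + t^2 * ∫ x in (0:ℝ)..(2*π), (g x)^2 := by
  have e1 : ∀ x : ℝ, (f x + t * g x)^2
      = (f x)^2 + (2*t)*(f x * g x) + t^2 * (g x)^2 := fun x => by ring
  rw [intervalIntegral.integral_congr (fun x _ => e1 x)]
  rw [intervalIntegral.integral_add (f := fun x => (f x)^2 + (2*t)*(f x * g x))
      (g := fun x => t^2 * (g x)^2) (((hf.pow 2).add
      ((continuous_const.mul (hf.mul hg)))).intervalIntegrable _ _)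
    ((continuous_const.mul (hg.pow 2)).intervalIntegrable _ _),
    intervalIntegral.integral_add (f := fun x => (f x)^2) (g := fun x => (2*t)*(f x * g x))
      ((hf.pow 2).intervalIntegrable _ _)
      ((continuous_const.mul (hf.mul hg)).intervalIntegrable _ _),
    intervalIntegral.integral_const_mul, intervalIntegral.integral_const_mul]

lemma cauchy_schwarz (hf : Continuous f) (hg : Continuous g) :
    |∫ x in (0:ℝ)..(2*π), f x * g x|
      ≤ Real.sqrt (∫ x in (0:ℝ)..(2*π), (f x)^2)
        * Real.sqrt (∫ x in (0:ℝ)..(2*π), (g x)^2) := by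
  set A := ∫ x in (0:ℝ)..(2*π), (f x)^2 with hA
  set B := ∫ x in (0:ℝ)..(2*π), f x * g x with hB
  set C := ∫ x in (0:ℝ)..(2*π), (g x)^2 with hC
  have hA0 : 0 ≤ A := sq_int_nonneg f
  have hC0 : 0 ≤ C := sq_int_nonneg g
  have hq : ∀ t : ℝ, 0 ≤ A + 2*t*B + t^2*C := by
    intro t
    have h0 : 0 ≤ ∫ x in (0:ℝ)..(2*π), (f x + t * g x)^2 := sq_int_nonneg _
    rwa [sq_expand hf hg t] at h0
  have hBAC : B^2 ≤ A * C := by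
    rcases eq_or_lt_of_le hC0 with h0 | hpos
    · have hB0 : B = 0 := by
        by_contra hne
        have ht := hq (-(A+1)/(2*B))
        rw [← h0] at ht
        have : 2 * (-(A+1)/(2*B)) * B = -(A+1) := by field_simp
        nlinarith
      rw [hB0, ← h0]; simp
    · have ht := hq (-B/C)
      have hc' : C ≠ 0 := hpos.ne'
      have key : A + 2 * (-B/C) * B + (-B/C)^2 * C = (A*C - B^2)/C := by
        field_simp
        ring
      rw [key] at ht
      have h2 := mul_nonneg ht hpos.le
      rw [div_mul_cancel₀ _ hc'] at h2
      linarith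
  calc |B| = Real.sqrt (B^2) := (Real.sqrt_sq_eq_abs B).symm
    _ ≤ Real.sqrt (A * C) := Real.sqrt_le_sqrt hBAC
    _ = Real.sqrt A * Real.sqrt C := Real.sqrt_mul hA0 C

lemma minkowski_ineq (hf : Continuous f) (hg : Continuous g) :
    Real.sqrt (∫ x in (0:ℝ)..(2*π), (f x + g x)^2)
      ≤ Real.sqrt (∫ x in (0:ℝ)..(2*π), (f x)^2)
        + Real.sqrt (∫ x in (0:ℝ)..(2*π), (g x)^2) := by
  set A := ∫ x in (0:ℝ)..(2*π), (f x)^2 with hA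
  set B := ∫ x in (0:ℝ)..(2*π), f x * g x with hB
  set C := ∫ x in (0:ℝ)..(2*π), (g x)^2 with hC
  have hA0 : 0 ≤ A := sq_int_nonneg f
  have hC0 : 0 ≤ C := sq_int_nonneg g
  have hcs := cauchy_schwarz hf hg
  have hexp : (∫ x in (0:ℝ)..(2*π), (f x + g x)^2) = A + 2*1*B + 1^2*C := by
    have := sq_expand hf hg 1
    simpa using this
  have hle : (∫ x in (0:ℝ)..(2*π), (f x + g x)^2)
      ≤ (Real.sqrt A + Real.sqrt C)^2 := by
    rw [hexp]
    have e1 : (Real.sqrt A + Real.sqrt C)^2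
        = A + 2 * (Real.sqrt A * Real.sqrt C) + C := by
      rw [add_sq, Real.sq_sqrt hA0, Real.sq_sqrt hC0]; ring
    rw [e1]
    have : B ≤ Real.sqrt A * Real.sqrt C := (le_abs_self B).trans hcs
    nlinarith
  calc Real.sqrt (∫ x in (0:ℝ)..(2*π), (f x + g x)^2)
      ≤ Real.sqrt ((Real.sqrt A + Real.sqrt C)^2) := Real.sqrt_le_sqrt hle
    _ = Real.sqrt A + Real.sqrt C := Real.sqrt_sq (by positivity)

lemma integral_sq_mono (hf : Continuous f) (hg : Continuous g)
    (hpt : ∀ x, |f x| ≤ |g x|) :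
    (∫ x in (0:ℝ)..(2*π), (f x)^2) ≤ ∫ x in (0:ℝ)..(2*π), (g x)^2 := by
  refine intervalIntegral.integral_mono_on pi2_pos.le
    ((hf.pow 2).intervalIntegrable _ _)
    ((hg.pow 2).intervalIntegrable _ _) (fun x _ => ?_)
  have := pow_le_pow_left₀ (abs_nonneg (f x)) (hpt x) 2
  rwa [sq_abs, sq_abs] at this

end ineq


section final

variable {f : ℝ → ℝ}

lemma integral_sub_fmean_sq_le (hf : Continuous f) :
    (∫ x in (0:ℝ)..(2*π), (f x - fmean f)^2) ≤ ∫ x in (0:ℝ)..(2*π), (f x)^2 := by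
  set c := fmean f with hc
  have hint : (∫ x in (0:ℝ)..(2*π), f x) = 2*π*c := by
    rw [hc, fmean]
    field_simp
  have e1 : ∀ x : ℝ, (f x - c)^2 = (f x)^2 + (-2*c)*(f x) + c^2 := fun x => by ring
  rw [intervalIntegral.integral_congr (fun x _ => e1 x),
    intervalIntegral.integral_add (f := fun x => (f x)^2 + (-2*c)*(f x)) (g := fun _ => c^2)
      (((hf.pow 2).add
      (continuous_const.mul hf)).intervalIntegrable _ _)
      (intervalIntegrable_const),
    intervalIntegral.integral_add (f := fun x => (f x)^2) (g := fun x => (-2*c)*(f x))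
      ((hf.pow 2).intervalIntegrable _ _)
      ((continuous_const.mul hf).intervalIntegrable _ _),
    intervalIntegral.integral_const_mul, intervalIntegral.integral_const,
    hint]
  have : (0:ℝ) ≤ 2*π*c^2 := by positivity
  simp only [smul_eq_mul, sub_zero]
  nlinarith [this]

lemma dop_sq_le (hf : Continuous f) (hfp : Periodic f (2*π)) :
    (∫ x in (0:ℝ)..(2*π), (Dop f x)^2) ≤ ∫ x in (0:ℝ)..(2*π), (f x)^2 := by
  have hderiv : ∀ x, HasDerivAt (Dop f) (f x - fmean f) x := by
    intro x
    exact (hasDerivAt_primitive (hf.sub continuous_const) x).sub_const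
      ((1/(2*π)) * ∫ z in (0:ℝ)..(2*π), ∫ y in (0:ℝ)..z, (f y - fmean f))
  have h1 := wirtinger_ineq (Dop f) (fun x => f x - fmean f) (Dop_continuous hf)
    (hf.sub continuous_const) (Dop_periodic hf hfp) (fun x => by simp [hfp x])
    hderiv (Dop_integral_zero hf)
  exact h1.trans (integral_sub_fmean_sq_le hf)

lemma abs_sin_sub (a b : ℝ) : |Real.sin a - Real.sin b| ≤ |a - b| := by
  rw [Real.sin_sub_sin, abs_mul, abs_mul, abs_two]
  have h1 : |Real.sin ((a-b)/2)| ≤ |a-b|/2 := by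
    have := Real.abs_sin_le_abs (x := (a-b)/2)
    rwa [abs_div, abs_two] at this
  have h2 : |Real.cos ((a+b)/2)| ≤ 1 := Real.abs_cos_le_one _
  nlinarith [abs_nonneg (Real.sin ((a-b)/2)), abs_nonneg (Real.cos ((a+b)/2)),
    abs_nonneg (a-b)]

lemma abs_cos_sub (a b : ℝ) : |Real.cos a - Real.cos b| ≤ |a - b| := by
  rw [Real.cos_sub_cos, abs_mul, abs_mul, abs_neg, abs_two]
  have h1 : |Real.sin ((a-b)/2)| ≤ |a-b|/2 := by
    have := Real.abs_sin_le_abs (x := (a-b)/2)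
    rwa [abs_div, abs_two] at this
  have h2 : |Real.sin ((a+b)/2)| ≤ 1 := Real.abs_sin_le_one _
  nlinarith [abs_nonneg (Real.sin ((a-b)/2)), abs_nonneg (Real.sin ((a+b)/2)),
    abs_nonneg (a-b)]

lemma int_sq_le_two_pi (hf : Continuous f) (hb : ∀ x, |f x| ≤ 1) :
    (∫ x in (0:ℝ)..(2*π), (f x)^2) ≤ 2*π := by
  have h1 : (∫ x in (0:ℝ)..(2*π), (f x)^2) ≤ ∫ x in (0:ℝ)..(2*π), (1:ℝ) := by
    refine intervalIntegral.integral_mono_on pi2_pos.le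
      ((hf.pow 2).intervalIntegrable _ _) intervalIntegrable_const (fun x _ => ?_)
    have := pow_le_pow_left₀ (abs_nonneg (f x)) (hb x) 2
    simpa [sq_abs] using this
  simpa using h1

lemma ctilde_bound (v w : ℝ → ℝ)
    (hv : Continuous v) (hvp : Periodic v (2*π))
    (hw : Continuous w) (hwp : Periodic w (2*π)) :
    |Ctilde v - Ctilde w|
      ≤ 2 * Real.sqrt (2*π) * Real.sqrt (∫ x in (0:ℝ)..(2*π), (v x - w x)^2) := by
  set sv : ℝ → ℝ := fun x => Real.sin (v x) with hsv
  set sw : ℝ → ℝ := fun x => Real.sin (w x) with hsw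
  have csv : Continuous sv := Real.continuous_sin.comp hv
  have csw : Continuous sw := Real.continuous_sin.comp hw
  have psv : Periodic sv (2*π) := fun x => by simp [hsv, hvp x]
  have psw : Periodic sw (2*π) := fun x => by simp [hsw, hwp x]
  have psvw : Periodic (fun x => sv x - sw x) (2*π) := fun x => by simp [psv x, psw x]
  set N := Real.sqrt (∫ x in (0:ℝ)..(2*π), (v x - w x)^2) with hN
  have hN0 : 0 ≤ N := Real.sqrt_nonneg _
  have hDsv := Dop_continuous csv
  have hDsw := Dop_continuous csw
  have hcv : Continuous fun x => Real.cos (v x) := Real.continuous_cos.comp hv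
  have hcw : Continuous fun x => Real.cos (w x) := Real.continuous_cos.comp hw
  -- split the difference
  have hsplit : Ctilde v - Ctilde w
      = (∫ x in (0:ℝ)..(2*π), (Real.cos (v x) - Real.cos (w x)) * Dop sv x)
        + ∫ x in (0:ℝ)..(2*π), Real.cos (w x) * Dop (fun y => sv y - sw y) x := by
    unfold Ctilde
    rw [← intervalIntegral.integral_sub (f := fun x => Real.cos (v x) * Dop sv x)
      (g := fun x => Real.cos (w x) * Dop sw x) ((hcv.mul hDsv).intervalIntegrable _ _)
      ((hcw.mul hDsw).intervalIntegrable _ _),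
      ← intervalIntegral.integral_add
        (f := fun x => (Real.cos (v x) - Real.cos (w x)) * Dop sv x)
        (g := fun x => Real.cos (w x) * Dop (fun y => sv y - sw y) x)
        (((hcv.sub hcw).mul hDsv).intervalIntegrable _ _)
        ((hcw.mul (Dop_continuous (csv.sub csw))).intervalIntegrable _ _)]
    refine intervalIntegral.integral_congr fun x _ => ?_
    rw [Dop_sub csv csw]
    ring
  rw [hsplit]
  -- first term
  have hb1 : |∫ x in (0:ℝ)..(2*π), (Real.cos (v x) - Real.cos (w x)) * Dop sv x|
      ≤ N * Real.sqrt (2*π) := by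
    refine (cauchy_schwarz (hcv.sub hcw) hDsv).trans ?_
    have e1 : Real.sqrt (∫ x in (0:ℝ)..(2*π), (Real.cos (v x) - Real.cos (w x))^2) ≤ N := by
      refine Real.sqrt_le_sqrt (integral_sq_mono (hcv.sub hcw) (hv.sub hw) fun x => ?_)
      exact abs_cos_sub (v x) (w x)
    have e2 : Real.sqrt (∫ x in (0:ℝ)..(2*π), (Dop sv x)^2) ≤ Real.sqrt (2*π) := by
      refine Real.sqrt_le_sqrt ((dop_sq_le csv psv).trans ?_)
      exact int_sq_le_two_pi csv fun x => by simpa [hsv] using Real.abs_sin_le_one ..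
    exact mul_le_mul e1 e2 (Real.sqrt_nonneg _) hN0
  -- second term
  have hb2 : |∫ x in (0:ℝ)..(2*π), Real.cos (w x) * Dop (fun y => sv y - sw y) x|
      ≤ Real.sqrt (2*π) * N := by
    refine (cauchy_schwarz hcw (Dop_continuous (csv.sub csw))).trans ?_
    have e1 : Real.sqrt (∫ x in (0:ℝ)..(2*π), (Real.cos (w x))^2) ≤ Real.sqrt (2*π) := by
      refine Real.sqrt_le_sqrt (int_sq_le_two_pi hcw fun x => Real.abs_cos_le_one _)
    have e2 : Real.sqrt (∫ x in (0:ℝ)..(2*π), (Dop (fun y => sv y - sw y) x)^2) ≤ N := by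
      refine Real.sqrt_le_sqrt ((dop_sq_le (csv.sub csw) psvw).trans ?_)
      refine integral_sq_mono (csv.sub csw) (hv.sub hw) fun x => ?_
      exact abs_sin_sub (v x) (w x)
    exact mul_le_mul e1 e2 (Real.sqrt_nonneg _) (Real.sqrt_nonneg _)
  calc |(∫ x in (0:ℝ)..(2*π), (Real.cos (v x) - Real.cos (w x)) * Dop sv x)
        + ∫ x in (0:ℝ)..(2*π), Real.cos (w x) * Dop (fun y => sv y - sw y) x|
      ≤ |∫ x in (0:ℝ)..(2*π), (Real.cos (v x) - Real.cos (w x)) * Dop sv x|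
        + |∫ x in (0:ℝ)..(2*π), Real.cos (w x) * Dop (fun y => sv y - sw y) x| := abs_add_le _ _
    _ ≤ N * Real.sqrt (2*π) + Real.sqrt (2*π) * N := add_le_add hb1 hb2
    _ = 2 * Real.sqrt (2*π) * N := by ring

end final


/-- The vector field `v ↦ 𝒟(sin∘v) − C̃(v)/H₀` of the integral form of the sine-Gordon
equation is globally Lipschitz in the `L²(0,2π)` norm, with constant `1 + 4π/|H₀|`. -/
theorem sineGordon_vector_field_lipschitz (H₀ : ℝ) (hH₀ : H₀ ≠ 0) (v w : ℝ → ℝ)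
    (hv : Continuous v) (hvp : Function.Periodic v (2 * π))
    (hw : Continuous w) (hwp : Function.Periodic w (2 * π)) :
    Real.sqrt (∫ x in (0:ℝ)..(2 * π),
        ((Dop (fun y => Real.sin (v y)) x - Ctilde v / H₀) -
          (Dop (fun y => Real.sin (w y)) x - Ctilde w / H₀)) ^ 2) ≤
      (1 + 4 * π / |H₀|) * Real.sqrt (∫ x in (0:ℝ)..(2 * π), (v x - w x) ^ 2) := by
  set sv : ℝ → ℝ := fun x => Real.sin (v x) with hsv
  set sw : ℝ → ℝ := fun x => Real.sin (w x) with hsw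
  have csv : Continuous sv := Real.continuous_sin.comp hv
  have csw : Continuous sw := Real.continuous_sin.comp hw
  have psvw : Function.Periodic (fun x => sv x - sw x) (2*π) := fun x => by
    simp [hsv, hsw, hvp x, hwp x]
  set c : ℝ := (Ctilde w - Ctilde v)/H₀ with hc
  set N := Real.sqrt (∫ x in (0:ℝ)..(2*π), (v x - w x)^2) with hN
  have hN0 : 0 ≤ N := Real.sqrt_nonneg _
  have hH : (0:ℝ) < |H₀| := abs_pos.mpr hH₀
  have hrw : ∀ x : ℝ, ((Dop sv x - Ctilde v / H₀) - (Dop sw x - Ctilde w / H₀))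
      = Dop (fun y => sv y - sw y) x + (fun _ : ℝ => c) x := by
    intro x
    rw [Dop_sub csv csw, hc]
    ring
  rw [intervalIntegral.integral_congr (fun x _ => by rw [hrw x])]
  have hmink := minkowski_ineq (Dop_continuous (csv.sub csw))
    (continuous_const : Continuous fun _ : ℝ => c)
  refine hmink.trans ?_
  have e1 : Real.sqrt (∫ x in (0:ℝ)..(2*π), (Dop (fun y => sv y - sw y) x)^2) ≤ N := by
    refine Real.sqrt_le_sqrt ((dop_sq_le (csv.sub csw) psvw).trans ?_)
    exact integral_sq_mono (csv.sub csw) (hv.sub hw) fun x => abs_sin_sub (v x) (w x)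
  have e2 : Real.sqrt (∫ x in (0:ℝ)..(2*π), ((fun _ : ℝ => c) x)^2)
      ≤ (4*π/|H₀|) * N := by
    have hint : (∫ x in (0:ℝ)..(2*π), ((fun _ : ℝ => c) x)^2) = (2*π) * c^2 := by
      rw [intervalIntegral.integral_const]
      simp
    rw [hint, Real.sqrt_mul pi2_pos.le, Real.sqrt_sq_eq_abs]
    have hcb : |c| ≤ 2 * Real.sqrt (2*π) * N / |H₀| := by
      rw [hc, abs_div, abs_sub_comm]
      have hct := ctilde_bound v w hv hvp hw hwp
      rw [← hN] at hct
      gcongr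
    have step : Real.sqrt (2*π) * |c|
        ≤ Real.sqrt (2*π) * (2 * Real.sqrt (2*π) * N / |H₀|) :=
      mul_le_mul_of_nonneg_left hcb (Real.sqrt_nonneg _)
    have hss : Real.sqrt (2*π) * Real.sqrt (2*π) = 2*π := Real.mul_self_sqrt pi2_pos.le
    have eqn : Real.sqrt (2*π) * (2 * Real.sqrt (2*π) * N / |H₀|)
        = (4*π/|H₀|) * N := by
      rw [show Real.sqrt (2*π) * (2 * Real.sqrt (2*π) * N / |H₀|)
          = (Real.sqrt (2*π) * Real.sqrt (2*π)) * (2 * N / |H₀|) from by ring, hss]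
      ring
    rw [eqn] at step
    exact step
  calc Real.sqrt (∫ x in (0:ℝ)..(2*π), (Dop (fun y => sv y - sw y) x)^2)
        + Real.sqrt (∫ x in (0:ℝ)..(2*π), ((fun _ : ℝ => c) x)^2)
      ≤ N + (4*π/|H₀|) * N := add_le_add e1 e2
    _ = (1 + 4 * π / |H₀|) * N := by ring
end
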